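/- Let R be a left Artinian ring, 𝒮 a set of pairwise non-isomorphic simple R-modules, 𝒮' a set of representatives of the remaining isomorphism classes of simples, and E = ∏_{S'∈𝒮'} E(S') the product of injective hulls of members of 𝒮'. Define 𝒯 = {M : Hom_R(M,F)=0 for all F with Hom_R(S,F)=0 ∀S∈𝒮}. Then E is an injective cogenerator for 𝒯: E is injective, and an R-module M is in 𝒯 if and only if Hom_R(M,E) = 0. -/

import Mathlib

universe u

lemma injective_pi_aux {R : Type u} [Ring R] {ι : Type u} (E' : ι → Type u)
    [∀ i, AddCommGroup (E' i)] [∀ i, Module R (E' i)]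
    (h : ∀ i, Module.Injective R (E' i)) : Module.Injective R (∀ i, E' i) := by
  constructor
  intro X Y _ _ _ _ f hf g
  choose h' hh' using fun i => (h i).out f hf ((LinearMap.proj i).comp g)
  exact ⟨LinearMap.pi h', fun x => funext fun i => hh' i x⟩

/-- Let `R` be left Artinian, `𝒮` a set of pairwise non-isomorphic simple modules,
`S' i` (for `i : ι`) representatives of the remaining isomorphism classes of simples,
and `E' i` an injective hull of `S' i`.  Let `𝒯` be the torsion class of all modules `M`
with `Hom(M, F) = 0` whenever `Hom(S, F) = 0` for all `S ∈ 𝒮`.  Then `E = ∏ i, E' i`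
is an injective cogenerator for `𝒯`: `E` is injective and `M ∈ 𝒯 ↔ Hom(M, E) = 0`. -/
theorem stmt15 {R : Type u} [Ring R] [IsArtinianRing R]
    (𝒮 : Set (ModuleCat.{u} R)) (h𝒮 : ∀ S ∈ 𝒮, IsSimpleModule R S)
    (h𝒮' : ∀ S₁ ∈ 𝒮, ∀ S₂ ∈ 𝒮, Nonempty ((S₁ : ModuleCat.{u} R) ≃ₗ[R] S₂) → S₁ = S₂)
    (ι : Type u) (S' : ι → Type u) [∀ i, AddCommGroup (S' i)] [∀ i, Module R (S' i)]
    (hsimple : ∀ i, IsSimpleModule R (S' i))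
    (hnotin : ∀ i, ¬ ∃ S ∈ 𝒮, Nonempty (S' i ≃ₗ[R] S))
    (hrep : ∀ (W : ModuleCat.{u} R), IsSimpleModule R W →
      (¬ ∃ S ∈ 𝒮, Nonempty ((W : ModuleCat.{u} R) ≃ₗ[R] S)) →
      ∃ i, Nonempty ((W : ModuleCat.{u} R) ≃ₗ[R] S' i))
    (E' : ι → Type u) [∀ i, AddCommGroup (E' i)] [∀ i, Module R (E' i)]
    (hE'inj : ∀ i, Module.Injective R (E' i))
    (j : ∀ i, S' i →ₗ[R] E' i) (hj : ∀ i, Function.Injective (j i))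
    (hess : ∀ i, ∀ N : Submodule R (E' i), N ⊓ LinearMap.range (j i) = ⊥ → N = ⊥) :
    Module.Injective R (∀ i, E' i) ∧
    ∀ M : ModuleCat.{u} R,
      ((∀ F : ModuleCat.{u} R, (∀ S ∈ 𝒮, ∀ g : (S : ModuleCat.{u} R) →ₗ[R] F, g = 0) →
          ∀ f : M →ₗ[R] F, f = 0) ↔
        ∀ f : M →ₗ[R] (∀ i, E' i), f = 0) := by
  classical
  refine ⟨injective_pi_aux E' hE'inj, fun M => ⟨fun hT => ?_, fun hE => ?_⟩⟩
  · -- M ∈ 𝒯 → Hom(M, E) = 0.  Key: Hom(S, E) = 0 for S ∈ 𝒮.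
    refine hT (ModuleCat.of R (∀ i, E' i)) (fun S hS g => ?_)
    by_contra hg
    -- some coordinate is nonzero
    obtain ⟨i, hgi⟩ : ∃ i, (LinearMap.proj (φ := E') i).comp g ≠ 0 := by
      by_contra hall
      push_neg at hall
      refine hg (LinearMap.ext fun x => funext fun i => ?_)
      exact LinearMap.congr_fun (hall i) x
    set gi : ↥S →ₗ[R] E' i := (LinearMap.proj i).comp g with hgi_def
    haveI := h𝒮 S hS
    -- gi is injective since S is simple
    have hker : LinearMap.ker gi = ⊥ := by
      rcases (h𝒮 S hS).1.eq_bot_or_eq_top (LinearMap.ker gi) with h | h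
      · exact h
      · exact absurd (LinearMap.ker_eq_top.mp h) hgi
    have hinj : Function.Injective gi := LinearMap.ker_eq_bot.mp hker
    -- range gi and range (j i) are atoms
    have hsg : IsSimpleModule R ↥(LinearMap.range gi) :=
      IsSimpleModule.congr (LinearEquiv.ofInjective gi hinj).symm
    have hsj : IsSimpleModule R ↥(LinearMap.range (j i)) :=
      haveI := hsimple i
      IsSimpleModule.congr (LinearEquiv.ofInjective (j i) (hj i)).symm
    have hag : IsAtom (LinearMap.range gi) := isSimpleModule_iff_isAtom.mp hsg
    have haj : IsAtom (LinearMap.range (j i)) := isSimpleModule_iff_isAtom.mp hsj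
    have hne : LinearMap.range gi ⊓ LinearMap.range (j i) ≠ ⊥ := by
      intro h
      exact hag.1 (hess i _ h)
    have h1 : LinearMap.range gi ⊓ LinearMap.range (j i) = LinearMap.range gi :=
      (hag.le_iff.mp inf_le_left).resolve_left hne
    have h2 : LinearMap.range gi ⊓ LinearMap.range (j i) = LinearMap.range (j i) :=
      (haj.le_iff.mp inf_le_right).resolve_left hne
    have heq : LinearMap.range (j i) = LinearMap.range gi := h2.symm.trans h1
    -- S' i ≃ S, contradicting hnotin
    refine hnotin i ⟨S, hS, ⟨?_⟩⟩
    exact (LinearEquiv.ofInjective (j i) (hj i)).trans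
      ((LinearEquiv.ofEq _ _ heq).trans (LinearEquiv.ofInjective gi hinj).symm)
  · -- Hom(M, E) = 0 → M ∈ 𝒯
    intro F hF f
    by_contra hf
    obtain ⟨x₀, hx₀⟩ : ∃ x, f x ≠ 0 := by
      by_contra hall
      push_neg at hall
      exact hf (LinearMap.ext hall)
    set y : ↥F := f x₀ with hy_def
    set N : Submodule R ↥F := Submodule.span R {y} with hN_def
    haveI : IsArtinian R ↥N := isArtinian_of_fg_of_artinian N (Submodule.fg_span_singleton y)
    haveI : Nontrivial ↥N := by
      refine ⟨⟨y, Submodule.mem_span_singleton_self y⟩, 0, ?_⟩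
      simp [Subtype.ext_iff, hx₀]
    haveI : IsAtomic (Submodule R ↥N) :=
      isAtomic_of_orderBot_wellFounded_lt (wellFounded_lt (α := Submodule R ↥N))
    obtain ⟨T, hTa⟩ := IsAtomic.exists_atom (α := Submodule R ↥N)
    haveI hTs : IsSimpleModule R ↥T := isSimpleModule_iff_isAtom.mpr hTa
    haveI : Nontrivial ↥T := IsSimpleModule.nontrivial R ↥T
    obtain ⟨t, ht0⟩ := exists_ne (0 : ↥T)
    -- inclusion of T into F
    set incl : ↥T →ₗ[R] ↥F := N.subtype.comp T.subtype with hincl_def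
    have hincl_inj : Function.Injective incl :=
      Subtype.val_injective.comp Subtype.val_injective
    -- T is not isomorphic to any member of 𝒮
    have hTnot : ¬ ∃ S ∈ 𝒮, Nonempty ((ModuleCat.of R ↥T : ModuleCat.{u} R) ≃ₗ[R] S) := by
      rintro ⟨S, hS, ⟨e⟩⟩
      have h0 : incl.comp e.symm.toLinearMap = 0 := hF S hS _
      have ht' : incl t = 0 := by
        have h1 : incl (e.symm (e t)) = 0 := LinearMap.congr_fun h0 (e t)
        rwa [e.symm_apply_apply] at h1
      exact ht0 (hincl_inj (by simpa using ht'))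
    obtain ⟨i, ⟨e⟩⟩ := hrep (ModuleCat.of R ↥T) hTs hTnot
    -- extend (j i) ∘ e along incl using injectivity of E' i
    obtain ⟨h, hh⟩ := (hE'inj i).out incl hincl_inj ((j i).comp e.toLinearMap)
    -- the composite M → F → E' i → ∏ E' i must vanish
    have hcomp : (LinearMap.single R E' i).comp (h.comp f) = 0 := hE _
    have hzero : ∀ x : ↥M, h (f x) = 0 := by
      intro x
      have h1 := LinearMap.congr_fun hcomp x
      have h2 := congrFun h1 i
      simpa using h2
    -- incl t ∈ N, so incl t = r • y = f (r • x₀)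
    obtain ⟨r, hr⟩ := Submodule.mem_span_singleton.mp ((t : ↥N).2 : ((t : ↥N) : ↥F) ∈ N)
    have hfy : incl t = f (r • x₀) := by rw [map_smul]; exact hr.symm
    have hz : h (incl t) = 0 := by rw [hfy]; exact hzero _
    rw [hh t] at hz
    exact ht0 (e.map_eq_zero_iff.mp ((hj i) (by simpa using hz)))
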